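/- Let A ⊆ P(I) be a finite poset under inclusion in which every chain has length at most 1, and let a ∈ A be a linear point with witness a↑ (so a ⊊ a↑). Set B = A∖{a}. Define φ : L(A) → L(B) by φ(Q)_c = Q_c for all c ∈ B, and define s : L(B) → L(A) by s(Q)_c = Q_c for c ∈ B and s(Q)_a(x) = Σ_{y ∈ E_{a↑}, y_a = x} Q_{a↑}(y) for x ∈ E_a. Then φ and s are well defined (they land in the respective local polytopes), s ∘ φ = id on L(A), and φ ∘ s = id on L(B); in particular φ is a bijection from L(A) onto L(B). -/
import Mathlib


/- Setup: `I` a finite index set, `E i` nonempty finite sets of values, `A : Finset (Finset I)`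
a collection of subsets of `I` ordered by inclusion.  For `a : Finset I`,
`Ea E a = ∏_{i ∈ a} E i`, with coordinate projections `proj`.  A family of "local functions"
indexed by `A` is an element of `Fam E A`. -/

abbrev Ea {I : Type} (E : I → Type) (a : Finset I) : Type := (i : a) → E i

def proj {I : Type} (E : I → Type) {a b : Finset I} (h : b ⊆ a) (x : Ea E a) : Ea E b :=
  fun i => x ⟨i, h i.2⟩

abbrev Fam {I : Type} (E : I → Type) (A : Finset (Finset I)) : Type :=
  (a : A) → Ea E (a : Finset I) → ℝ

-- The local polytope `L(A)`: families of probability distributions compatible by marginalization.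
open Classical in
def MemL {I : Type} (E : I → Type) [∀ i, Fintype (E i)] (A : Finset (Finset I))
    (Q : Fam E A) : Prop :=
  (∀ a : A, (∀ x, 0 ≤ Q a x) ∧ (∑ x, Q a x) = 1) ∧
  (∀ (a b : A) (h : (b : Finset I) ⊆ (a : Finset I)) (x : Ea E (b : Finset I)),
    Q b x = ∑ y ∈ Finset.univ.filter (fun y : Ea E (a : Finset I) => proj E h y = x), Q a y)

-- The interior `L(A)°`: members of `L(A)` with all distributions strictly positive.
def MemLInt {I : Type} (E : I → Type) [∀ i, Fintype (E i)] (A : Finset (Finset I))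
    (Q : Fam E A) : Prop :=
  MemL E A Q ∧ ∀ (a : A) (x : Ea E (a : Finset I)), 0 < Q a x

-- The tangent space `TL(A)` of the local polytope.
open Classical in
def MemT {I : Type} (E : I → Type) [∀ i, Fintype (E i)] (A : Finset (Finset I))
    (u : Fam E A) : Prop :=
  (∀ a : A, (∑ x, u a x) = 0) ∧
  (∀ (a b : A) (h : (b : Finset I) ⊆ (a : Finset I)) (x : Ea E (b : Finset I)),
    u b x = ∑ y ∈ Finset.univ.filter (fun y : Ea E (a : Finset I) => proj E h y = x), u a y)

-- `μ` is the Möbius function of the poset `A` (ordered by inclusion): `μ x y = 0` for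
-- `x, y ∈ A` with `¬ y ⊆ x`, and `∑_{b ∈ A, c ⊆ b ⊆ a} μ b c = δ_{a,c}` for `c ⊆ a` in `A`.
open Classical in
def IsMobius {I : Type} (A : Finset (Finset I)) (μ : Finset I → Finset I → ℤ) : Prop :=
  (∀ x ∈ A, ∀ y ∈ A, ¬ y ⊆ x → μ x y = 0) ∧
  (∀ a ∈ A, ∀ c ∈ A, c ⊆ a →
    (∑ b ∈ A.filter (fun b => c ⊆ b ∧ b ⊆ a), μ b c) = if a = c then 1 else 0)

-- `c_A(x) = ∑_{b ∈ A, b ⊇ x} μ_A(b, x)`.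
open Classical in
noncomputable def coefC {I : Type} (A : Finset (Finset I)) (μ : Finset I → Finset I → ℤ)
    (x : Finset I) : ℤ :=
  ∑ b ∈ A.filter (fun b => x ⊆ b), μ b x

-- Shannon entropy `S(Q) = −∑_x Q x ln (Q x)` (with `0 ln 0 = 0`, as `Real.log 0 = 0`).
noncomputable def entropy {α : Type*} [Fintype α] (Q : α → ℝ) : ℝ :=
  -∑ x, Q x * Real.log (Q x)

-- The generalized Bethe free energy
-- `BT_{A,H}(Q) = ∑_{a ∈ A} c_A(a) (∑_x Q_a(x) H_a(x) − S(Q_a))`.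
open Classical in
noncomputable def BT {I : Type} (E : I → Type) [∀ i, Fintype (E i)]
    (A : Finset (Finset I)) (μ : Finset I → Finset I → ℤ)
    (H : (c : Finset I) → Ea E c → ℝ) (Q : Fam E A) : ℝ :=
  ∑ a : A, (coefC A μ (a : Finset I) : ℝ) *
    ((∑ x, Q a x * H (a : Finset I) x) - entropy (Q a))

-- A critical point of a functional `F` on `L(A)°`: a point `Q ∈ L(A)°` at which the
-- derivative at `t = 0` of `t ↦ F(Q + t u)` vanishes for every tangent vector `u ∈ TL(A)`.
open Classical in
def IsCritical {I : Type} (E : I → Type) [∀ i, Fintype (E i)]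
    (A : Finset (Finset I)) (F : Fam E A → ℝ) (Q : Fam E A) : Prop :=
  MemLInt E A Q ∧
  ∀ u : Fam E A, MemT E A u →
    deriv (fun t : ℝ => F (fun a x => Q a x + t * u a x)) 0 = 0

-- A global minimizer of `F` over `L(A)`.
def IsMinimizer {I : Type} (E : I → Type) [∀ i, Fintype (E i)]
    (A : Finset (Finset I)) (F : Fam E A → ℝ) (Q : Fam E A) : Prop :=
  MemL E A Q ∧ ∀ Q' : Fam E A, MemL E A Q' → F Q ≤ F Q'

-- Every chain of `A` has length at most 1: there is no chain `x ⊂ y ⊂ z` in `A`.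
def ChainsShort {I : Type} (A : Finset (Finset I)) : Prop :=
  ∀ x ∈ A, ∀ y ∈ A, ∀ z ∈ A, x ⊂ y → y ⊂ z → False

-- The restriction map `φ : L(A) → L(A∖{a})`, `φ(Q)_c = Q_c`.
def phiMap {I : Type} [DecidableEq I] (E : I → Type) (A : Finset (Finset I)) (a : Finset I)
    (Q : Fam E A) : Fam E (A.erase a) :=
  fun b => Q ⟨b, Finset.mem_of_mem_erase b.2⟩

-- The section `s : L(A∖{a}) → L(A)` for a linear point `a` with witness `aUp`:
-- `s(Q)_c = Q_c` for `c ≠ a`, and `s(Q)_a(x) = ∑_{y ∈ E_{aUp}, y_a = x} Q_{aUp}(y)`.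
open Classical in
noncomputable def secMap {I : Type} [DecidableEq I] (E : I → Type) [∀ i, Fintype (E i)]
    (A : Finset (Finset I)) (a aUp : Finset I) (hsub : a ⊆ aUp) (hUp : aUp ∈ A.erase a)
    (Q : Fam E (A.erase a)) : Fam E A :=
  fun c x =>
    if h : (c : Finset I) = a then
      ∑ y ∈ Finset.univ.filter (fun y : Ea E aUp =>
          ∀ i : {w // w ∈ (c : Finset I)}, y ⟨i, hsub (h ▸ i.2)⟩ = x i),
        Q ⟨aUp, hUp⟩ y
    else Q ⟨c, Finset.mem_erase.2 ⟨h, c.2⟩⟩ x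

lemma mem_univ' {α : Type} {inst : Fintype α} (b : α) : b ∈ @Finset.univ α inst :=
  @Finset.mem_univ α inst b

lemma my_fiber {α β : Type} (g : α → β) (f : α → ℝ) (T : Finset β) (U : Finset α)
    (hT : ∀ b, b ∈ T) (hU : ∀ y, y ∈ U)
    (S : β → Finset α) (hS : ∀ b y, y ∈ S b ↔ g y = b) :
    ∑ b ∈ T, ∑ y ∈ S b, f y = ∑ y ∈ U, f y := by
  classical
  have h1 : ∀ b : β, S b = U.filter (fun y => g y = b) := by
    intro b; ext y; simp [hS, hU]
  calc ∑ b ∈ T, ∑ y ∈ S b, f y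
      = ∑ b ∈ T, ∑ y ∈ U.filter (fun y => g y = b), f y := by
        exact Finset.sum_congr rfl fun b _ => Finset.sum_congr (h1 b) fun _ _ => rfl
    _ = ∑ y ∈ U, f y := Finset.sum_fiberwise_of_maps_to (fun i _ => hT _) f

lemma sum_single {α : Type} (f : α → ℝ) (x : α) (s : Finset α)
    (hs : ∀ y, y ∈ s ↔ y = x) : f x = ∑ y ∈ s, f y := by
  have : s = {x} := by ext y; simp [hs]
  rw [this, Finset.sum_singleton]

open Classical in
lemma secMap_at {I : Type} [DecidableEq I] (E : I → Type) [∀ i, Fintype (E i)]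
    (A : Finset (Finset I)) (a aUp : Finset I) (hsub : a ⊆ aUp) (hUpB : aUp ∈ A.erase a)
    (Q : Fam E (A.erase a)) (haA : a ∈ A) (x : Ea E a) :
    secMap E A a aUp hsub hUpB Q ⟨a, haA⟩ x
      = ∑ y ∈ Finset.univ.filter (fun y : Ea E aUp => proj E hsub y = x), Q ⟨aUp, hUpB⟩ y := by
  simp only [secMap, dif_pos rfl]
  refine Finset.sum_congr ?_ fun _ _ => rfl
  ext y
  simp [proj, funext_iff]

open Classical in
lemma secMap_ne {I : Type} [DecidableEq I] (E : I → Type) [∀ i, Fintype (E i)]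
    (A : Finset (Finset I)) (a aUp : Finset I) (hsub : a ⊆ aUp) (hUpB : aUp ∈ A.erase a)
    (Q : Fam E (A.erase a)) (c : A) (hc : (c : Finset I) ≠ a) (x : Ea E (c : Finset I)) :
    secMap E A a aUp hsub hUpB Q c x = Q ⟨c, Finset.mem_erase.2 ⟨hc, c.2⟩⟩ x := by
  simp only [secMap, dif_neg hc]

open Classical in
-- Let `A ⊆ P(I)` be a finite poset under inclusion in which every chain has length at most 1,
-- and let `a ∈ A` be a linear point with witness `aUp` (`a ⊊ aUp` and every `b ∈ A` with
-- `a ⊊ b` satisfies `aUp ⊆ b`).  With `B = A∖{a}`, the maps `φ` and `s` above are well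
-- defined (they map the local polytopes into each other), `s ∘ φ = id` on `L(A)` and
-- `φ ∘ s = id` on `L(B)`; in particular `φ` is a bijection from `L(A)` onto `L(B)`.
set_option maxHeartbeats 2000000 in
theorem stmt13 {I : Type} [Fintype I] [DecidableEq I]
    (E : I → Type) [∀ i, Fintype (E i)] [∀ i, DecidableEq (E i)] [∀ i, Nonempty (E i)]
    (A : Finset (Finset I)) (hchain : ChainsShort A)
    (a aUp : Finset I) (haA : a ∈ A) (hUpA : aUp ∈ A) (hlt : a ⊂ aUp)
    (hlin : ∀ b ∈ A, a ⊂ b → aUp ⊆ b)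
    (hUpB : aUp ∈ A.erase a) :
    (∀ Q : Fam E A, MemL E A Q → MemL E (A.erase a) (phiMap E A a Q)) ∧
    (∀ Q : Fam E (A.erase a), MemL E (A.erase a) Q →
      MemL E A (secMap E A a aUp hlt.subset hUpB Q)) ∧
    (∀ Q : Fam E A, MemL E A Q → secMap E A a aUp hlt.subset hUpB (phiMap E A a Q) = Q) ∧
    (∀ Q : Fam E (A.erase a), MemL E (A.erase a) Q →
      phiMap E A a (secMap E A a aUp hlt.subset hUpB Q) = Q) := by
  classical
  refine ⟨?_, ?_, ?_, ?_⟩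
  · -- phi well defined
    intro Q hQ
    refine ⟨fun c => hQ.1 ⟨c, Finset.mem_of_mem_erase c.2⟩, fun c b h x => ?_⟩
    exact hQ.2 ⟨c, Finset.mem_of_mem_erase c.2⟩ ⟨b, Finset.mem_of_mem_erase b.2⟩ h x
  · -- s well defined
    intro Q hQ
    constructor
    · intro c
      by_cases hc : (c : Finset I) = a
      · have hceq : c = (⟨a, haA⟩ : {x // x ∈ A}) := Subtype.ext hc
        subst hceq
        constructor
        · intro x
          rw [secMap_at]
          exact Finset.sum_nonneg fun y _ => (hQ.1 ⟨aUp, hUpB⟩).1 y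
        · refine Eq.trans ?_ ((hQ.1 ⟨aUp, hUpB⟩).2)
          refine Eq.trans (Finset.sum_congr rfl fun x _ =>
            secMap_at E A a aUp hlt.subset hUpB Q haA x) ?_
          refine my_fiber (proj E hlt.subset) _ _ _ ?_ ?_ _ ?_
          · exact fun b => mem_univ' b
          · exact fun y => mem_univ' y
          · intro b y
            simp [Finset.mem_filter]
      · constructor
        · intro x
          rw [secMap_ne E A a aUp hlt.subset hUpB Q c hc]
          exact (hQ.1 ⟨c, Finset.mem_erase.2 ⟨hc, c.2⟩⟩).1 x
        · refine Eq.trans (Finset.sum_congr rfl fun x _ =>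
            secMap_ne E A a aUp hlt.subset hUpB Q c hc x) ?_
          exact (hQ.1 ⟨c, Finset.mem_erase.2 ⟨hc, c.2⟩⟩).2
    · intro c b h x
      by_cases hc : (c : Finset I) = a
      · by_cases hb : (b : Finset I) = a
        · -- b = c = a
          have hceq : c = (⟨a, haA⟩ : {x // x ∈ A}) := Subtype.ext hc
          have hbeq : b = (⟨a, haA⟩ : {x // x ∈ A}) := Subtype.ext hb
          subst hceq; subst hbeq
          refine sum_single _ x _ fun y => ?_
          have hproj : proj E h y = y := funext fun i => rfl
          simp [hproj]
        · -- b ⊂ a ⊂ aUp, contradiction with chains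
          have hceq : c = (⟨a, haA⟩ : {x // x ∈ A}) := Subtype.ext hc
          subst hceq
          exact absurd hlt (fun h2 =>
            hchain (b : Finset I) b.2 a haA aUp hUpA (lt_of_le_of_ne h hb) h2)
      · by_cases hb : (b : Finset I) = a
        · -- b = a, c = aUp
          have hbeq : b = (⟨a, haA⟩ : {x // x ∈ A}) := Subtype.ext hb
          subst hbeq
          have hac : a ⊂ (c : Finset I) := lt_of_le_of_ne h (fun h2 => hc h2.symm)
          have hupc : aUp ⊆ (c : Finset I) := hlin c c.2 hac
          have hceq2 : (c : Finset I) = aUp := by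
            by_contra h2
            exact hchain a haA aUp hUpA c c.2 hlt (lt_of_le_of_ne hupc (fun h3 => h2 h3.symm))
          have hceq : c = (⟨aUp, hUpA⟩ : {x // x ∈ A}) := Subtype.ext hceq2
          subst hceq
          rw [secMap_at E A a aUp h hUpB Q haA x]
          refine Eq.trans ?_ (Finset.sum_congr rfl fun y _ =>
            (secMap_ne E A a aUp hlt.subset hUpB Q ⟨aUp, hUpA⟩ hc y).symm)
          exact Finset.sum_congr (by ext y; simp [Finset.mem_filter]) fun y _ => rfl
        · -- both ≠ a
          rw [secMap_ne E A a aUp hlt.subset hUpB Q b hb x]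
          refine Eq.trans
            (hQ.2 ⟨c, Finset.mem_erase.2 ⟨hc, c.2⟩⟩ ⟨b, Finset.mem_erase.2 ⟨hb, b.2⟩⟩ h x) ?_
          exact Finset.sum_congr rfl fun y _ =>
            (secMap_ne E A a aUp hlt.subset hUpB Q c hc y).symm
  · -- s ∘ phi = id
    intro Q hQ
    funext c x
    by_cases hc : (c : Finset I) = a
    · have hceq : c = (⟨a, haA⟩ : {x // x ∈ A}) := Subtype.ext hc
      subst hceq
      rw [secMap_at E A a aUp hlt.subset hUpB _ haA x]
      refine Eq.trans ?_ (hQ.2 ⟨aUp, hUpA⟩ ⟨a, haA⟩ hlt.subset x).symm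
      exact Finset.sum_congr (by ext y; simp [Finset.mem_filter]) fun y _ => rfl
    · rw [secMap_ne E A a aUp hlt.subset hUpB _ c hc x]
      rfl
  · -- phi ∘ s = id
    intro Q hQ
    funext b x
    show secMap E A a aUp hlt.subset hUpB Q ⟨b, Finset.mem_of_mem_erase b.2⟩ x = Q b x
    rw [secMap_ne E A a aUp hlt.subset hUpB Q ⟨b, Finset.mem_of_mem_erase b.2⟩
      (Finset.mem_erase.1 b.2).1 x]
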